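/- Let X be a nonempty set, p a partial metric on X, and {x_n}, {y_n} two sequences in X such that p(x_n, y_n) → 0 as n → ∞. If {x_n} is rough statistically convergent to x with roughness degree r ≥ 0 and there is a positive number c such that p(x_n, x_n) ≤ c for all n, then {y_n} is rough statistically convergent to x with roughness degree r + c. -/

import Mathlib

/-- A partial metric on a set `X`. -/
structure IsPartialMetric {X : Type*} (p : X → X → ℝ) : Prop where
  nonneg : ∀ x y : X, 0 ≤ p x y
  self_le : ∀ x y : X, p x x ≤ p x y
  eq_iff : ∀ x y : X, x = y ↔ p x x = p x y ∧ p x y = p y y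
  symm : ∀ x y : X, p x y = p y x
  triangle : ∀ x y z : X, p x y ≤ p x z + p z y - p z z

open Classical in
/-- `A ⊆ ℕ` has natural density `d`. -/
def HasNatDensity (A : Set ℕ) (d : ℝ) : Prop :=
  Filter.Tendsto
    (fun n : ℕ => (((Finset.range n).filter (fun k => k ∈ A)).card : ℝ) / (n : ℝ))
    Filter.atTop (nhds d)

/-- `l` is a rough statistical limit point of the sequence `x` with roughness degree `r`,
i.e. `l ∈ st-LIM^r x_n`. -/
def RStatLimit {X : Type*} (p : X → X → ℝ) (x : ℕ → X) (r : ℝ) (l : X) : Prop :=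
  ∀ ε : ℝ, 0 < ε → HasNatDensity {n : ℕ | r + ε ≤ |p (x n) l - p l l|} 0

open Classical in
lemma hasNatDensity_zero_of_subset_union_finite (A B : Set ℕ) (N : ℕ)
    (hsub : ∀ n, n ∈ A → n ∈ B ∨ n < N) (hB : HasNatDensity B 0) :
    HasNatDensity A 0 := by
  unfold HasNatDensity at *
  have hcard : ∀ n : ℕ,
      (((Finset.range n).filter (fun k => k ∈ A)).card : ℝ)
        ≤ (((Finset.range n).filter (fun k => k ∈ B)).card : ℝ) + N := by
    intro n
    have hss : (Finset.range n).filter (fun k => k ∈ A)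
        ⊆ ((Finset.range n).filter (fun k => k ∈ B)) ∪ Finset.range N := by
      intro k hk
      simp only [Finset.mem_filter, Finset.mem_range] at hk
      rcases hsub k hk.2 with h | h
      · exact Finset.mem_union_left _ (by simp [Finset.mem_filter, hk.1, h])
      · exact Finset.mem_union_right _ (by simpa using h)
    calc (((Finset.range n).filter (fun k => k ∈ A)).card : ℝ)
        ≤ ((((Finset.range n).filter (fun k => k ∈ B)) ∪ Finset.range N).card : ℝ) := by
          exact_mod_cast Finset.card_le_card hss
      _ ≤ (((Finset.range n).filter (fun k => k ∈ B)).card : ℝ) + N := by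
          have := Finset.card_union_le ((Finset.range n).filter (fun k => k ∈ B))
            (Finset.range N)
          exact_mod_cast (by simpa using this)
  have hupper : Filter.Tendsto
      (fun n : ℕ => ((((Finset.range n).filter (fun k => k ∈ B)).card : ℝ) + N) / n)
      Filter.atTop (nhds 0) := by
    have h1 : Filter.Tendsto (fun n : ℕ => (N : ℝ) / n) Filter.atTop (nhds 0) :=
      tendsto_const_div_atTop_nhds_zero_nat (N : ℝ)
    have := hB.add h1
    simpa [add_div] using this
  refine tendsto_of_tendsto_of_tendsto_of_le_of_le tendsto_const_nhds hupper ?_ ?_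
  · intro n
    positivity
  · intro n
    exact div_le_div_of_nonneg_right (hcard n) (Nat.cast_nonneg n)

/-- If `p (x_n, y_n) → 0`, `x_n` is `r`-statistically convergent to `x`, and the
self-distances satisfy `p (x_n, x_n) ≤ c` for all `n` with `c > 0`, then `y_n` is
`(r + c)`-statistically convergent to `x`. -/
theorem rStatLimit_transfer_add
    {X : Type*} [Nonempty X] (p : X → X → ℝ) (hp : IsPartialMetric p)
    (x y : ℕ → X)
    (hxy : Filter.Tendsto (fun n : ℕ => p (x n) (y n)) Filter.atTop (nhds 0))
    (l : X) (r : ℝ) (hr : 0 ≤ r) (hx : RStatLimit p x r l)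
    (c : ℝ) (hc : 0 < c) (hselfx : ∀ n : ℕ, p (x n) (x n) ≤ c) :
    RStatLimit p y (r + c) l := by
  intro ε hε
  -- eventually p (x n) (y n) < c + ε/2
  obtain ⟨N, hN⟩ : ∃ N : ℕ, ∀ n ≥ N, p (x n) (y n) < c + ε / 2 := by
    have h := hxy.eventually (gt_mem_nhds (show (0:ℝ) < c + ε / 2 by linarith))
    exact Filter.eventually_atTop.mp h
  have key : ∀ n, |p (y n) l - p l l| ≤ |p (x n) l - p l l| + p (x n) (y n) := by
    intro n
    have h1 := hp.triangle (y n) l (x n)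
    have h2 := hp.triangle (x n) l (y n)
    have hs := hp.symm (y n) (x n)
    have hn1 := hp.nonneg (x n) (x n)
    have hn2 := hp.nonneg (y n) (y n)
    have hb : |p (y n) l - p (x n) l| ≤ p (x n) (y n) := by
      rw [abs_le]; constructor <;> linarith
    calc |p (y n) l - p l l| = |(p (y n) l - p (x n) l) + (p (x n) l - p l l)| := by
          ring_nf
      _ ≤ |p (y n) l - p (x n) l| + |p (x n) l - p l l| := abs_add_le _ _
      _ ≤ |p (x n) l - p l l| + p (x n) (y n) := by linarith
  apply hasNatDensity_zero_of_subset_union_finite _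
    {n : ℕ | r + ε / 2 ≤ |p (x n) l - p l l|} N ?_ (hx (ε / 2) (by linarith))
  intro n hn
  simp only [Set.mem_setOf_eq] at hn ⊢
  by_cases hnN : n < N
  · exact Or.inr hnN
  · left
    have := hN n (le_of_not_gt hnN)
    have := key n
    linarith
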